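/- Let A ∈ ℝ^{m×n} with x = 0 the only solution of {x ≥ 0, Ax ≤ 0}. Then the set of λ ∈ ℝ^m with λ > 0 and Aᵀλ > 0 is a nonempty open convex cone in ℝ^m. -/

import Mathlib

private lemma combo_pos' {a b p q : ℝ} (ha : 0 ≤ a) (hb : 0 ≤ b) (hab : a + b = 1)
    (hp : 0 < p) (hq : 0 < q) : 0 < a * p + b * q := by
  rcases eq_or_lt_of_le ha with rfl | ha'
  · simp only [zero_add] at hab
    subst hab
    simpa using hq
  · nlinarith [mul_nonneg hb hq.le]

theorem stmt_15 (m n : ℕ) (A : Matrix (Fin m) (Fin n) ℝ)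
    (h : ∀ x : Fin n → ℝ, (∀ j, 0 ≤ x j) → (∀ i, A.mulVec x i ≤ 0) → x = 0) :
    let S : Set (Fin m → ℝ) :=
      {l | (∀ i, 0 < l i) ∧ ∀ j, 0 < A.transpose.mulVec l j}
    S.Nonempty ∧ IsOpen S ∧ Convex ℝ S ∧
      ∀ t : ℝ, 0 < t → ∀ l ∈ S, t • l ∈ S := by
  intro S
  refine ⟨?_, ?_, ?_, ?_⟩
  · -- Nonemptiness
    rcases Nat.eq_zero_or_pos n with hn | hn
    · refine ⟨fun _ => 1, fun i => one_pos, fun j => ?_⟩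
      exact absurd j.isLt (by omega)
    -- n ≥ 1. Separate K = A '' simplex from the nonpositive orthant N.
    set K : Set (Fin m → ℝ) := A.mulVecLin '' stdSimplex ℝ (Fin n) with hK
    set N : Set (Fin m → ℝ) := {y | ∀ i, y i ≤ 0} with hN
    have hKc : Convex ℝ K := (convex_stdSimplex ℝ _).linear_image A.mulVecLin
    have hKcomp : IsCompact K :=
      (isCompact_stdSimplex ℝ _).image A.mulVecLin.continuous_of_finiteDimensional
    have hNconv : Convex ℝ N := by
      intro y hy z hz a b ha hb hab i
      have h1 := mul_nonpos_of_nonneg_of_nonpos ha (hy i)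
      have h2 := mul_nonpos_of_nonneg_of_nonpos hb (hz i)
      simpa using add_nonpos h1 h2
    have hNclosed : IsClosed N := by
      have : N = ⋂ i, (fun y : Fin m → ℝ => y i) ⁻¹' Set.Iic 0 := by
        ext y; simp [hN]
      rw [this]
      exact isClosed_iInter fun i => IsClosed.preimage (continuous_apply i) isClosed_Iic
    have hdisj : Disjoint K N := by
      rw [Set.disjoint_left]
      rintro a ⟨x, hx, rfl⟩ haN
      have hx0 : x = 0 := h x hx.1 haN
      have hs := hx.2
      rw [hx0] at hs
      norm_num at hs
    obtain ⟨f, u, v, hfu, huv, hfv⟩ :=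
      geometric_hahn_banach_compact_closed hKc hKcomp hNconv hNclosed hdisj
    have hv0 : v < 0 := by simpa using hfv 0 (fun i => le_refl 0)
    have hfN : ∀ y ∈ N, 0 ≤ f y := by
      intro y hy
      by_contra hneg
      push_neg at hneg
      set t : ℝ := (v - 1) / f y with htdef
      have ht0 : 0 < t := div_pos_of_neg_of_neg (by linarith) hneg
      have hty : t • y ∈ N := fun i => by
        simpa using mul_nonpos_of_nonneg_of_nonpos ht0.le (hy i)
      have hlt := hfv _ hty
      rw [map_smul, smul_eq_mul, htdef, div_mul_cancel₀ _ (ne_of_lt hneg)] at hlt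
      linarith
    set l : Fin m → ℝ := fun i => -(f (Pi.single i 1)) with hldef
    have hlnn : ∀ i, 0 ≤ l i := by
      intro i
      have hmem : (-(Pi.single i 1) : Fin m → ℝ) ∈ N := by
        intro k
        simp only [Pi.neg_apply, neg_nonpos]
        rcases eq_or_ne i k with rfl | hik
        · simp
        · simp [Pi.single_eq_of_ne (Ne.symm hik)]
      have hh := hfN _ hmem
      rw [map_neg] at hh
      simpa [hldef] using hh
    have hrep : ∀ z : Fin m → ℝ, f z = -∑ i, z i * l i := by
      intro z
      have hp := LinearMap.pi_apply_eq_sum_univ (f : (Fin m → ℝ) →ₗ[ℝ] ℝ) z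
      simp only [ContinuousLinearMap.coe_coe] at hp
      rw [hp, ← Finset.sum_neg_distrib]
      refine Finset.sum_congr rfl fun i _ => ?_
      have hsingle : (fun j => if i = j then (1:ℝ) else 0) = Pi.single i 1 := by
        ext j; rcases eq_or_ne i j with rfl | hij
        · simp
        · simp [hij, Pi.single_eq_of_ne (Ne.symm hij)]
      rw [hsingle, hldef, smul_eq_mul]
      ring
    have hkey : ∀ j : Fin n, -v ≤ A.transpose.mulVec l j := by
      intro j
      have hmem : (Pi.single j 1 : Fin n → ℝ) ∈ stdSimplex ℝ (Fin n) := by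
        constructor
        · intro k
          rcases eq_or_ne j k with rfl | hjk
          · simp
          · simp [Pi.single_eq_of_ne (Ne.symm hjk)]
        · simp
      have hlt := hfu _ ⟨_, hmem, rfl⟩
      have heq : f (A.mulVecLin (Pi.single j 1)) = -(A.transpose.mulVec l j) := by
        rw [hrep, neg_inj]
        simp only [Matrix.mulVecLin_apply, Matrix.mulVec_single, mul_one]
        rw [Matrix.mulVec]
        simp [dotProduct, Matrix.transpose_apply]
      rw [heq] at hlt
      linarith
    -- perturb l to make it strictly positive
    set c : ℝ := -v with hcdef
    have hc : 0 < c := by simp [hcdef]; linarith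
    set M : ℝ := ∑ j : Fin n, |∑ i : Fin m, A i j| with hMdef
    have hM0 : 0 ≤ M := Finset.sum_nonneg fun j _ => abs_nonneg _
    have hMb : ∀ j : Fin n, |∑ i : Fin m, A i j| ≤ M := by
      intro j
      rw [hMdef]
      exact Finset.single_le_sum (f := fun j => |∑ i : Fin m, A i j|)
        (fun k _ => abs_nonneg _) (Finset.mem_univ j)
    set ε : ℝ := c / (M + 1) with hεdef
    have hε : 0 < ε := by positivity
    have hεM : ε * (M + 1) = c := div_mul_cancel₀ _ (by positivity)
    refine ⟨fun i => l i + ε, fun i => by simpa using add_pos_of_nonneg_of_pos (hlnn i) hε, fun j => ?_⟩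
    have hexp : A.transpose.mulVec (fun i => l i + ε) j
        = A.transpose.mulVec l j + ε * ∑ i : Fin m, A i j := by
      rw [Matrix.mulVec, Matrix.mulVec]
      simp only [dotProduct, Matrix.transpose_apply, mul_add,
        Finset.sum_add_distrib]
      congr 1
      rw [Finset.mul_sum]
      exact Finset.sum_congr rfl fun i _ => mul_comm _ _
    rw [hexp]
    have h1 := hkey j
    have h2 := abs_le.mp (hMb j)
    nlinarith [mul_le_mul_of_nonneg_left h2.1 hε.le, mul_le_mul_of_nonneg_left h2.2 hε.le]
  · -- Openness
    have hS : S = (⋂ i, {l : Fin m → ℝ | 0 < l i}) ∩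
        ⋂ j, {l : Fin m → ℝ | 0 < A.transpose.mulVec l j} := by
      ext l
      simp [S, Set.mem_iInter, forall_and]
    rw [hS]
    refine IsOpen.inter (isOpen_iInter_of_finite fun i => ?_)
      (isOpen_iInter_of_finite fun j => ?_)
    · exact isOpen_lt continuous_const (continuous_apply i)
    · refine isOpen_lt continuous_const ?_
      have : Continuous fun l : Fin m → ℝ => A.transpose.mulVecLin l j :=
        (continuous_apply j).comp A.transpose.mulVecLin.continuous_of_finiteDimensional
      simpa only [Matrix.mulVecLin_apply] using this
  · -- Convexity
    intro x hx y hy a b ha hb hab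
    constructor
    · intro i
      simp only [Pi.add_apply, Pi.smul_apply, smul_eq_mul]
      exact combo_pos' ha hb hab (hx.1 i) (hy.1 i)
    · intro j
      simp only [Matrix.mulVec_add, Matrix.mulVec_smul, Pi.add_apply, Pi.smul_apply,
        smul_eq_mul]
      exact combo_pos' ha hb hab (hx.2 j) (hy.2 j)
  · -- Cone
    intro t ht l hl
    constructor
    · intro i
      simpa using mul_pos ht (hl.1 i)
    · intro j
      rw [Matrix.mulVec_smul]
      simpa using mul_pos ht (hl.2 j)
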